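/- Let G ∈ ℝ^{N×N} be symmetric and positive semidefinite, and let t₀ > 0. Every trajectory q : [t₀, ∞) → ℝ^N of the NAGD game dynamics q''(t) + (3/t) q'(t) + G q(t) = 0 satisfies: the velocity q'(t) → 0 as t → ∞, and q(t) converges to a limit q^∞ lying in the null space of G; moreover, the orthogonal projection of q(t) onto the orthogonal complement of the null space of G is O(t^{-3/2}): there is C ≥ 0 with ‖q(t) − P_{N(G)} q(t)‖₂ ≤ C t^{-3/2} for all t ≥ t₀, where P_{N(G)} is the orthogonal projection onto N(G) = {x : Gx = 0}. -/

import Mathlib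

open Filter

set_option maxHeartbeats 1000000

/-- The Euclidean norm `‖x‖₂` of a vector `x ∈ ℝ^N`. -/
noncomputable def e2norm {N : ℕ} (x : Fin N → ℝ) : ℝ := Real.sqrt (∑ i, x i ^ 2)

/-- NAGD game dynamics: `q` is a twice continuously differentiable trajectory with
velocity `v = q'` satisfying `q'' + (3/t) q' + G q = 0` on `[t₀, ∞)`. -/
def IsNAGDTrajectory {N : ℕ} (G : Matrix (Fin N) (Fin N) ℝ) (t₀ : ℝ)
    (q v : ℝ → Fin N → ℝ) : Prop :=
  (∀ t, t₀ ≤ t → HasDerivAt q (v t) t) ∧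
  (∀ t, t₀ ≤ t → HasDerivAt v (-(3 / t) • v t - G.mulVec (q t)) t)

local notation "⟪" x ", " y "⟫" => @inner ℝ _ _ x y

theorem const_on_Ici {E : Type*} [NormedAddCommGroup E] [NormedSpace ℝ E]
    {f : ℝ → E} {a : ℝ} (h : ∀ t, a ≤ t → HasDerivAt f 0 t) :
    ∀ t, a ≤ t → f t = f a := by
  intro t ht
  have hcont : ContinuousOn f (Set.Icc a t) :=
    fun x hx => ((h x hx.1).continuousAt).continuousWithinAt
  have hderiv : ∀ x ∈ Set.Ico a t, HasDerivWithinAt f 0 (Set.Ici x) x :=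
    fun x hx => (h x hx.1).hasDerivWithinAt
  exact constant_of_has_deriv_right_zero hcont hderiv t ⟨ht, le_refl t⟩


theorem le_of_deriv_nonpos' {f f' : ℝ → ℝ} {a : ℝ}
    (hf : ∀ t, a ≤ t → HasDerivAt f (f' t) t) (h0 : ∀ t, a ≤ t → f' t ≤ 0) :
    ∀ t, a ≤ t → f t ≤ f a := by
  intro t ht
  have hanti : AntitoneOn f (Set.Icc a t) := by
    apply antitoneOn_of_deriv_nonpos (convex_Icc a t)
    · exact fun x hx => ((hf x hx.1).continuousAt).continuousWithinAt
    · intro x hx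
      rw [interior_Icc] at hx
      exact (hf x hx.1.le).differentiableAt.differentiableWithinAt
    · intro x hx
      rw [interior_Icc] at hx
      rw [(hf x hx.1.le).deriv]
      exact h0 x hx.1.le
  exact hanti ⟨le_rfl, ht⟩ ⟨ht, le_rfl⟩ ht

theorem norm_add_sq_real' {F : Type*} [NormedAddCommGroup F] [InnerProductSpace ℝ F]
    (x y : F) : ‖x + y‖^2 = ‖x‖^2 + 2*⟪x,y⟫ + ‖y‖^2 := norm_add_sq_real x y

-- main decay lemma
theorem rpow_neg32 {t : ℝ} (ht : 0 < t) : Real.sqrt ((t^3)⁻¹) = t ^ (-(3:ℝ)/2) := by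
  have h1 : ((t:ℝ)^3)⁻¹ = t ^ (-(3:ℝ)) := by
    rw [← Real.rpow_natCast t 3, ← Real.rpow_neg ht.le]
    norm_num
  rw [h1, Real.sqrt_eq_rpow, ← Real.rpow_mul ht.le]
  norm_num

theorem decay_lemma {F : Type*} [NormedAddCommGroup F] [InnerProductSpace ℝ F]
    (A : F →L[ℝ] F) (hsymA : ∀ x y : F, ⟪A x, y⟫ = ⟪x, A y⟫)
    (hpsdA : ∀ x : F, 0 ≤ ⟪x, A x⟫)
    (t₀ μ : ℝ) (ht₀ : 0 < t₀) (hμ : 0 < μ) (r rv : ℝ → F)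
    (hr : ∀ t, t₀ ≤ t → HasDerivAt r (rv t) t)
    (hrv : ∀ t, t₀ ≤ t → HasDerivAt rv (-(3/t) • rv t - A (r t)) t)
    (hcoer : ∀ t, t₀ ≤ t → μ * ‖r t‖^2 ≤ ⟪r t, A (r t)⟫) :
    (∃ C : ℝ, 0 ≤ C ∧ ∀ t, t₀ ≤ t → ‖r t‖ ≤ C * t ^ (-(3:ℝ)/2)) ∧
    Tendsto rv atTop (nhds 0) := by
  set H : ℝ → ℝ := fun s => s^3 * ⟪rv s, rv s⟫ + 3*s^2 * ⟪r s, rv s⟫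
      + (3/2)*s*⟪r s, r s⟫ + s^3 * ⟪r s, A (r s)⟫ with hHdef
  have hH : ∀ t, t₀ ≤ t → HasDerivAt H ((3/2) * ⟪r t, r t⟫) t := by
      intro t ht
      have ht' : t ≠ 0 := (lt_of_lt_of_le ht₀ ht).ne'
      set rv' : F := -(3/t) • rv t - A (r t) with hrv'
      have h1 : HasDerivAt (fun s => s^3 * ⟪rv s, rv s⟫)
          (3*t^2 * ⟪rv t, rv t⟫ + t^3 * (⟪rv t, rv'⟫ + ⟪rv', rv t⟫)) t := by
        have := (hasDerivAt_pow 3 t).mul ((hrv t ht).inner ℝ (hrv t ht))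
        refine this.congr_deriv ?_
        rw [hrv']; norm_num
      have h2 : HasDerivAt (fun s => 3*s^2 * ⟪r s, rv s⟫)
          (3*(2*t) * ⟪r t, rv t⟫ + 3*t^2 * (⟪r t, rv'⟫ + ⟪rv t, rv t⟫)) t := by
        have := (((hasDerivAt_pow 2 t).const_mul 3)).mul ((hr t ht).inner ℝ (hrv t ht))
        refine this.congr_deriv ?_; push_cast; ring
      have h3 : HasDerivAt (fun s => (3/2)*s*⟪r s, r s⟫)
          ((3/2) * ⟪r t, r t⟫ + (3/2)*t*(⟪r t, rv t⟫ + ⟪rv t, r t⟫)) t := by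
        have := ((hasDerivAt_id t).const_mul (3/2)).mul ((hr t ht).inner ℝ (hr t ht))
        refine this.congr_deriv ?_; simp only [id]; push_cast; ring
      have hAr : HasDerivAt (fun s => A (r s)) (A (rv t)) t :=
        A.hasFDerivAt.comp_hasDerivAt t (hr t ht)
      have h4 : HasDerivAt (fun s => s^3 * ⟪r s, A (r s)⟫)
          (3*t^2 * ⟪r t, A (r t)⟫ + t^3 * (⟪r t, A (rv t)⟫ + ⟪rv t, A (r t)⟫)) t := by
        have := (hasDerivAt_pow 3 t).mul ((hr t ht).inner ℝ hAr)
        refine this.congr_deriv ?_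
        norm_num
      have htot := ((h1.add h2).add h3).add h4
      refine htot.congr_deriv ?_
      rw [hrv']
      have e1 : ⟪rv t, -(3/t) • rv t - A (r t)⟫ = -(3/t) * ⟪rv t, rv t⟫ - ⟪rv t, A (r t)⟫ := by
        rw [inner_sub_right, real_inner_smul_right]
      have e2 : ⟪-(3/t) • rv t - A (r t), rv t⟫ = -(3/t) * ⟪rv t, rv t⟫ - ⟪rv t, A (r t)⟫ := by
        rw [inner_sub_left, real_inner_smul_left, hsymA, real_inner_comm (A (r t)) (rv t), hsymA]
      have e3 : ⟪r t, -(3/t) • rv t - A (r t)⟫ = -(3/t) * ⟪r t, rv t⟫ - ⟪r t, A (r t)⟫ := by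
        rw [inner_sub_right, real_inner_smul_right]
      have e4 : ⟪r t, A (rv t)⟫ = ⟪rv t, A (r t)⟫ := by
        rw [← hsymA, real_inner_comm]
      have e5 : ⟪rv t, r t⟫ = ⟪r t, rv t⟫ := real_inner_comm _ _
      rw [e1, e2, e3, e4, e5]
      field_simp
      ring
  -- T
  obtain ⟨T, hTdef⟩ : ∃ T : ℝ, T = max t₀ (Real.sqrt (3/(2*μ))) := ⟨_, rfl⟩
  have hTt₀ : t₀ ≤ T := by rw [hTdef]; exact le_max_left _ _
  have hT0 : 0 < T := lt_of_lt_of_le ht₀ hTt₀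
  have hT2 : ∀ t, T ≤ t → 3/2 ≤ μ * t^2 := by
    intro t ht
    rw [hTdef] at ht
    have h1 : Real.sqrt (3/(2*μ)) ≤ t := le_trans (le_max_right _ _) ht
    have h2 : 3/(2*μ) ≤ t^2 := by
      rw [← Real.sq_sqrt (by positivity : (0:ℝ) ≤ 3/(2*μ))]
      exact pow_le_pow_left₀ (Real.sqrt_nonneg _) h1 2
    rw [div_le_iff₀ (by positivity : (0:ℝ) < 2*μ)] at h2
    nlinarith
  -- pointwise quadratic nonnegativity facts
  have hsq1 : ∀ t, t₀ ≤ t → 0 ≤ t^3*⟪rv t, rv t⟫ + 3*t^2*⟪r t, rv t⟫ + (9/4)*t*⟪r t, r t⟫ := by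
    intro t ht
    have htpos : 0 < t := lt_of_lt_of_le ht₀ ht
    have h := norm_add_sq_real' (t • rv t) ((3/2:ℝ) • r t)
    have h2 : 0 ≤ t * ‖t • rv t + (3/2:ℝ) • r t‖^2 := by positivity
    rw [h] at h2
    simp only [norm_smul, real_inner_smul_left, real_inner_smul_right, Real.norm_eq_abs,
      mul_pow, sq_abs] at h2
    rw [real_inner_comm (r t) (rv t)] at h2
    rw [real_inner_self_eq_norm_sq (rv t), real_inner_self_eq_norm_sq (r t)] at *
    nlinarith [sq_abs t, abs_nonneg t]
  have hsq2 : ∀ t, t₀ ≤ t → 0 ≤ t^3*⟪rv t, rv t⟫ + 6*t^2*⟪r t, rv t⟫ + 9*t*⟪r t, r t⟫ := by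
    intro t ht
    have htpos : 0 < t := lt_of_lt_of_le ht₀ ht
    have h := norm_add_sq_real' (t • rv t) ((3:ℝ) • r t)
    have h2 : 0 ≤ t * ‖t • rv t + (3:ℝ) • r t‖^2 := by positivity
    rw [h] at h2
    simp only [norm_smul, real_inner_smul_left, real_inner_smul_right, Real.norm_eq_abs,
      mul_pow, sq_abs] at h2
    rw [real_inner_comm (r t) (rv t)] at h2
    rw [real_inner_self_eq_norm_sq (rv t), real_inner_self_eq_norm_sq (r t)] at *
    nlinarith [sq_abs t, abs_nonneg t]
  -- lower bound on H
  have hHlow : ∀ t, T ≤ t → μ/2 * (t^3 * ⟪r t, r t⟫) ≤ H t := by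
    intro t ht
    have ht' : t₀ ≤ t := le_trans hTt₀ ht
    have htpos : 0 < t := lt_of_lt_of_le ht₀ ht'
    have hco := hcoer t ht'
    rw [← real_inner_self_eq_norm_sq (r t)] at hco
    have h1 := hsq1 t ht'
    have h2 := hT2 t ht
    have hcnn : 0 ≤ ⟪r t, r t⟫ := real_inner_self_nonneg
    simp only [hHdef]
    nlinarith [mul_le_mul_of_nonneg_left hco (le_of_lt (pow_pos htpos 3)),
      mul_le_mul_of_nonneg_right h2 (mul_nonneg htpos.le hcnn)]
  have hH0 : ∀ t, T ≤ t → 0 ≤ H t := by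
    intro t ht
    refine le_trans ?_ (hHlow t ht)
    have htpos : 0 < t := lt_of_lt_of_le hT0 ht
    have : 0 ≤ ⟪r t, r t⟫ := real_inner_self_nonneg
    positivity
  -- Gronwall
  set φ : ℝ → ℝ := fun s => H s * Real.exp ((3/(2*μ)) * (s^2)⁻¹) with hφdef
  have hφle : ∀ t, T ≤ t → φ t ≤ φ T := by
    apply le_of_deriv_nonpos' (f' := fun t => ((3/2) * ⟪r t, r t⟫
        + H t * ((3/(2*μ)) * (-2 * t^(-3:ℤ)))) * Real.exp ((3/(2*μ)) * (t^2)⁻¹))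
    · intro t ht
      have htpos : 0 < t := lt_of_lt_of_le hT0 ht
      have hg : HasDerivAt (fun s : ℝ => (3/(2*μ)) * (s^2)⁻¹) ((3/(2*μ)) * (-2 * t^(-3:ℤ))) t := by
        have h1 : HasDerivAt (fun s : ℝ => (s^2)⁻¹) (-2 * t^(-3:ℤ)) t := by
          simpa using hasDerivAt_zpow (-2) t (Or.inl htpos.ne')
        simpa using h1.const_mul (3/(2*μ))
      have hexp : HasDerivAt (fun s : ℝ => Real.exp ((3/(2*μ)) * (s^2)⁻¹))
          (Real.exp ((3/(2*μ)) * (t^2)⁻¹) * ((3/(2*μ)) * (-2 * t^(-3:ℤ)))) t := hg.exp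
      have := (hH t (le_trans hTt₀ ht)).mul hexp
      refine this.congr_deriv ?_
      ring
    · intro t ht
      have htpos : 0 < t := lt_of_lt_of_le hT0 ht
      have hlow := hHlow t ht
      have hkey : (3/2) * ⟪r t, r t⟫ + H t * ((3/(2*μ)) * (-2 * t^(-3:ℤ))) ≤ 0 := by
        have hz : (t:ℝ)^(-3:ℤ) = (t^3)⁻¹ := by
          rw [zpow_neg, zpow_ofNat]
        rw [hz]
        have ht3 : (0:ℝ) < t^3 := by positivity
        rw [← sub_nonneg]
        have expand : 0 - ((3/2) * ⟪r t, r t⟫ + H t * ((3/(2*μ)) * (-2 * (t^3)⁻¹)))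
            = (3/(μ * t^3)) * (H t - μ/2 * (t^3 * ⟪r t, r t⟫)) := by
          field_simp
          ring
        rw [expand]
        have : 0 ≤ H t - μ/2 * (t^3 * ⟪r t, r t⟫) := by linarith
        positivity
      exact mul_nonpos_of_nonpos_of_nonneg hkey (Real.exp_pos _).le
  obtain ⟨K0, hK0def⟩ : ∃ K : ℝ, K = H T * Real.exp ((3/(2*μ)) * (T^2)⁻¹) := ⟨_, rfl⟩
  have hK0 : 0 ≤ K0 := by
    rw [hK0def]; exact mul_nonneg (hH0 T le_rfl) (Real.exp_pos _).le
  have hHle : ∀ t, T ≤ t → H t ≤ K0 := by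
    intro t ht
    have htpos : 0 < t := lt_of_lt_of_le hT0 ht
    have h1 : H t ≤ H t * Real.exp ((3/(2*μ)) * (t^2)⁻¹) := by
      apply le_mul_of_one_le_right (hH0 t ht)
      rw [Real.one_le_exp_iff]
      positivity
    rw [hK0def]
    exact le_trans h1 (hφle t ht)
  have hrsq : ∀ t, T ≤ t → ‖r t‖^2 ≤ (2*K0/μ) * (t^3)⁻¹ := by
    intro t ht
    have htpos : 0 < t := lt_of_lt_of_le hT0 ht
    have h1 := le_trans (hHlow t ht) (hHle t ht)
    rw [real_inner_self_eq_norm_sq (r t)] at h1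
    have ht3 : (0:ℝ) < t^3 := by positivity
    have h2 : ‖r t‖^2 ≤ 2*K0/(μ*t^3) := by
      rw [le_div_iff₀ (by positivity : (0:ℝ) < μ*t^3)]
      nlinarith
    have h3 : 2*K0/(μ*t^3) = (2*K0/μ) * (t^3)⁻¹ := by
      field_simp
    rw [h3] at h2
    exact h2
  -- bound for t ≥ T
  have hrT : ∀ t, T ≤ t → ‖r t‖ ≤ Real.sqrt (2*K0/μ) * t ^ (-(3:ℝ)/2) := by
    intro t ht
    have htpos : 0 < t := lt_of_lt_of_le hT0 ht
    have h1 : ‖r t‖ = Real.sqrt (‖r t‖^2) := (Real.sqrt_sq (norm_nonneg _)).symm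
    rw [h1, ← rpow_neg32 htpos, ← Real.sqrt_mul (div_nonneg (by linarith) hμ.le)]
    exact Real.sqrt_le_sqrt (hrsq t ht)
  -- bound on [t₀, T]
  obtain ⟨B, hB⟩ : ∃ B, ∀ x ∈ Set.Icc t₀ T, ‖r x‖ ≤ B := by
    apply (isCompact_Icc).exists_bound_of_continuousOn
    exact fun x hx => ((hr x hx.1).continuousAt).continuousWithinAt
  obtain ⟨B', hB'def⟩ : ∃ x : ℝ, x = max B 0 := ⟨_, rfl⟩
  have hB' : 0 ≤ B' := by rw [hB'def]; exact le_max_right _ _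
  have hrI : ∀ t, t₀ ≤ t → t ≤ T → ‖r t‖ ≤ (B' * T ^ ((3:ℝ)/2)) * t ^ (-(3:ℝ)/2) := by
    intro t ht1 ht2
    have htpos : 0 < t := lt_of_lt_of_le ht₀ ht1
    have h1 : ‖r t‖ ≤ B' := by
      rw [hB'def]; exact le_trans (hB t ⟨ht1, ht2⟩) (le_max_left _ _)
    have h2 : (1:ℝ) ≤ T ^ ((3:ℝ)/2) * t ^ (-(3:ℝ)/2) := by
      have h3 : t ^ ((3:ℝ)/2) ≤ T ^ ((3:ℝ)/2) :=
        Real.rpow_le_rpow htpos.le ht2 (by norm_num)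
      have h4 : t ^ (-(3:ℝ)/2) = (t ^ ((3:ℝ)/2))⁻¹ := by
        rw [← Real.rpow_neg htpos.le]; norm_num
      have h5 : (0:ℝ) < t ^ ((3:ℝ)/2) := Real.rpow_pos_of_pos htpos _
      rw [h4, ← mul_inv_cancel₀ h5.ne']
      exact mul_le_mul_of_nonneg_right h3 (by positivity)
    calc ‖r t‖ ≤ B' := h1
    _ = B' * 1 := (mul_one _).symm
    _ ≤ B' * (T ^ ((3:ℝ)/2) * t ^ (-(3:ℝ)/2)) := mul_le_mul_of_nonneg_left h2 hB'
    _ = (B' * T ^ ((3:ℝ)/2)) * t ^ (-(3:ℝ)/2) := by ring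
  constructor
  · refine ⟨max (Real.sqrt (2*K0/μ)) (B' * T ^ ((3:ℝ)/2)), le_trans (Real.sqrt_nonneg _) (le_max_left _ _), ?_⟩
    intro t ht
    have htpos : 0 < t := lt_of_lt_of_le ht₀ ht
    have hrp : (0:ℝ) ≤ t ^ (-(3:ℝ)/2) := (Real.rpow_pos_of_pos htpos _).le
    rcases le_total t T with h | h
    · exact le_trans (hrI t ht h) (mul_le_mul_of_nonneg_right (le_max_right _ _) hrp)
    · exact le_trans (hrT t h) (mul_le_mul_of_nonneg_right (le_max_left _ _) hrp)
  -- rv tends to 0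
  · have hrv3 : ∀ t, T ≤ t → t^3 * ‖rv t‖^2 ≤ 2*K0 + 6*(2*K0/(μ*T^2)) := by
      intro t ht
      have htpos : 0 < t := lt_of_lt_of_le hT0 ht
      have ht0' : t₀ ≤ t := le_trans hTt₀ ht
      have h1 := hsq2 t ht0'
      have h2 := hHle t ht
      have h3 := hrsq t ht
      have hd : 0 ≤ ⟪r t, A (r t)⟫ := hpsdA _
      have hc : ⟪r t, r t⟫ = ‖r t‖^2 := real_inner_self_eq_norm_sq (r t)
      have ha : ⟪rv t, rv t⟫ = ‖rv t‖^2 := real_inner_self_eq_norm_sq (rv t)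
      simp only [hHdef] at h2
      rw [hc, ha] at h1 h2
      -- t^3 ‖rv‖² ≤ 2 H - 2 t³ d + 6 t ‖r‖² ≤ 2 K0 + 6 t ‖r‖²
      have h5 : t * ‖r t‖^2 ≤ (2*K0/μ) * (t^2)⁻¹ := by
        have := mul_le_mul_of_nonneg_left h3 htpos.le
        calc t * ‖r t‖^2 ≤ t * ((2*K0/μ) * (t^3)⁻¹) := this
        _ = (2*K0/μ) * (t * (t^3)⁻¹) := by ring
        _ = (2*K0/μ) * (t^2)⁻¹ := by
            congr 1
            field_simp
      have h6 : (t^2)⁻¹ ≤ (T^2)⁻¹ := by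
        apply inv_anti₀ (by positivity)
        nlinarith
      have h7 : t * ‖r t‖^2 ≤ (2*K0/μ) * (T^2)⁻¹ := by
        refine le_trans h5 (mul_le_mul_of_nonneg_left h6 (div_nonneg (by linarith) hμ.le))
      have h8 : 0 ≤ t^3 * ⟪r t, A (r t)⟫ := mul_nonneg (by positivity) hd
      have h9 : (2*K0/μ) * (T^2)⁻¹ = 2*K0/(μ*T^2) := by
        field_simp
      rw [h9] at h7
      have e1 : t^3*‖rv t‖^2 ≤ 2*K0 + 6*(t*‖r t‖^2) := by linarith
      linarith
    have hnorm : Tendsto (fun t => ‖rv t‖) atTop (nhds 0) := by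
      obtain ⟨K₂, hK₂def⟩ : ∃ K : ℝ, K = 2*K0 + 6*(2*K0/(μ*T^2)) := ⟨_, rfl⟩
      have hK₂ : 0 ≤ K₂ := by
        rw [hK₂def]
        exact add_nonneg (by linarith) (mul_nonneg (by norm_num) (div_nonneg (by linarith) (by positivity)))
      have hg : Tendsto (fun t : ℝ => Real.sqrt (K₂ * (t^3)⁻¹)) atTop (nhds 0) := by
        have h1 : Tendsto (fun t : ℝ => (t^3)⁻¹) atTop (nhds 0) :=
          (tendsto_pow_atTop (n := 3) (by norm_num)).inv_tendsto_atTop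
        have h2 : Tendsto (fun t : ℝ => K₂ * (t^3)⁻¹) atTop (nhds 0) := by
          simpa using h1.const_mul K₂
        have h3 := (Real.continuous_sqrt.tendsto 0).comp h2
        simpa [Function.comp_def] using h3
      apply squeeze_zero' (Eventually.of_forall (fun t => norm_nonneg _))
      · filter_upwards [eventually_ge_atTop T] with t ht
        have htpos : 0 < t := lt_of_lt_of_le hT0 ht
        have h1 : ‖rv t‖^2 ≤ K₂ * (t^3)⁻¹ := by
          have := hrv3 t ht
          rw [hK₂def]
          rw [← le_div_iff₀' (by positivity : (0:ℝ) < t^3)] at this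
          rwa [div_eq_mul_inv] at this
        calc ‖rv t‖ = Real.sqrt (‖rv t‖^2) := (Real.sqrt_sq (norm_nonneg _)).symm
        _ ≤ Real.sqrt (K₂ * (t^3)⁻¹) := Real.sqrt_le_sqrt h1
      · exact hg
    exact tendsto_zero_iff_norm_tendsto_zero.mpr hnorm

theorem psd_inner_zero {F : Type*} [NormedAddCommGroup F] [InnerProductSpace ℝ F]
    (A : F →L[ℝ] F) (hsym : ∀ x y : F, ⟪A x, y⟫ = ⟪x, A y⟫)
    (hpsd : ∀ x : F, 0 ≤ ⟪x, A x⟫) (x : F) (hx : ⟪x, A x⟫ = 0) : A x = 0 := by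
  set s : ℝ := ⟪A x, A x⟫ with hs
  have hs0 : 0 ≤ s := real_inner_self_nonneg
  set M : ℝ := ⟪A x, A (A x)⟫ with hM
  have hM0 : 0 ≤ M := hpsd (A x)
  set t : ℝ := -s/(M+1) with ht
  have hexp : ⟪x + t • A x, A (x + t • A x)⟫ = 2*t*s + t^2*M := by
    rw [map_add, map_smul, inner_add_left, inner_add_right, inner_add_right]
    rw [real_inner_smul_left, real_inner_smul_left, real_inner_smul_right, real_inner_smul_right]
    have h1 : ⟪x, A x⟫ = 0 := hx
    have h2 : ⟪x, A (A x)⟫ = s := by rw [← hsym]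
    have h3 : ⟪A x, x⟫ = 0 := by rw [hsym]; exact hx
    rw [h1, h2, ← hs, ← hM]
    ring
  have hge := hpsd (x + t • A x)
  rw [hexp, ht] at hge
  have hM1 : (0:ℝ) < M + 1 := by linarith
  have e : 2*(-s/(M+1))*s + (-s/(M+1))^2*M = (-(s^2*(M+2)))/((M+1)^2) := by
    field_simp
    ring
  rw [e, le_div_iff₀ (by positivity : (0:ℝ) < (M+1)^2)] at hge
  have hs2 : s^2 = 0 := by nlinarith [sq_nonneg s]
  have hs20 : s = 0 := by
    exact pow_eq_zero_iff (by norm_num) |>.mp hs2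
  have : ⟪A x, A x⟫ = 0 := hs20
  exact inner_self_eq_zero.mp this

theorem coercive_on_orthogonal {F : Type*} [NormedAddCommGroup F] [InnerProductSpace ℝ F]
    [FiniteDimensional ℝ F] (A : F →L[ℝ] F)
    (hsym : ∀ x y : F, ⟪A x, y⟫ = ⟪x, A y⟫) (hpsd : ∀ x : F, 0 ≤ ⟪x, A x⟫) :
    ∃ μ : ℝ, 0 < μ ∧ ∀ x ∈ (LinearMap.ker (A : F →ₗ[ℝ] F))ᗮ, μ * ‖x‖^2 ≤ ⟪x, A x⟫ := by
  set K : Submodule ℝ F := LinearMap.ker (A : F →ₗ[ℝ] F) with hK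
  by_cases hbot : Kᗮ = ⊥
  · refine ⟨1, one_pos, ?_⟩
    intro x hx
    rw [hbot, Submodule.mem_bot] at hx
    simp [hx]
  · obtain ⟨x0, hx0K, hx0⟩ := Submodule.exists_mem_ne_zero_of_ne_bot hbot
    set S : Set F := Metric.sphere 0 1 ∩ (Kᗮ : Set F) with hS
    have hScomp : IsCompact S :=
      (isCompact_sphere 0 1).inter_right (Kᗮ).closed_of_finiteDimensional
    have hSne : S.Nonempty := by
      refine ⟨‖x0‖⁻¹ • x0, ?_, Submodule.smul_mem _ _ hx0K⟩
      simp [norm_smul, norm_inv, inv_mul_cancel₀ (norm_ne_zero_iff.mpr hx0)]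
    have hfc : Continuous (fun x : F => ⟪x, A x⟫) :=
      continuous_id.inner (A.continuous)
    obtain ⟨z, hzS, hzmin'⟩ := hScomp.exists_isMinOn hSne hfc.continuousOn
    have hzmin : ∀ y ∈ S, ⟪z, A z⟫ ≤ ⟪y, A y⟫ := fun y hy => hzmin' hy
    refine ⟨⟪z, A z⟫, ?_, ?_⟩
    · rcases lt_or_eq_of_le (hpsd z) with h | h
      · exact h
      · exfalso
        have hAz : A z = 0 := psd_inner_zero A hsym hpsd z h.symm
        have hzK : z ∈ K := by rwa [hK, LinearMap.mem_ker]
        have hz0 : ⟪z, z⟫ = 0 := (Submodule.mem_orthogonal K z).mp hzS.2 z hzK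
        have : z = 0 := inner_self_eq_zero.mp hz0
        have hz1 : ‖z‖ = 1 := by simpa using hzS.1
        rw [this] at hz1; simp at hz1
    · intro x hx
      by_cases hx0' : x = 0
      · simp [hx0']
      · have hxn : ‖x‖ ≠ 0 := norm_ne_zero_iff.mpr hx0'
        have hy : (‖x‖⁻¹ • x) ∈ S := by
          refine ⟨?_, Submodule.smul_mem _ _ hx⟩
          simp [norm_smul, norm_inv, inv_mul_cancel₀ hxn]
        have := hzmin _ hy
        rw [map_smul, real_inner_smul_left, real_inner_smul_right] at this
        have hxpos : 0 < ‖x‖ := lt_of_le_of_ne (norm_nonneg x) (Ne.symm hxn)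
        have h2 : ⟪z, A z⟫ * ‖x‖^2 ≤ ⟪x, A x⟫ := by
          have h3 := mul_le_mul_of_nonneg_left this (by positivity : (0:ℝ) ≤ ‖x‖^2)
          calc ⟪z, A z⟫ * ‖x‖^2 = ‖x‖^2 * ⟪z, A z⟫ := by ring
          _ ≤ ‖x‖^2 * (‖x‖⁻¹ * (‖x‖⁻¹ * ⟪x, A x⟫)) := h3
          _ = ⟪x, A x⟫ := by field_simp
        linarith

/-- for `G` symmetric positive semidefinite, every NAGD trajectory satisfies
`q'(t) → 0`, `q(t) → q^∞ ∈ N(G)`, and the component of `q(t)` orthogonal to the null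
space `N(G)` (i.e. `q(t) - P_{N(G)} q(t)`) is bounded by `C t^{-3/2}`. -/
theorem stmt_7 {N : ℕ} (G : Matrix (Fin N) (Fin N) ℝ)
    (hsymm : G.transpose = G)
    (hpsd : ∀ x : Fin N → ℝ, 0 ≤ dotProduct x (G.mulVec x))
    (t₀ : ℝ) (ht₀ : 0 < t₀)
    (q v : ℝ → Fin N → ℝ) (htraj : IsNAGDTrajectory G t₀ q v) :
    Tendsto v atTop (nhds 0) ∧
    (∃ qinf : Fin N → ℝ, G.mulVec qinf = 0 ∧ Tendsto q atTop (nhds qinf)) ∧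
    (∃ C : ℝ, 0 ≤ C ∧ ∀ t, t₀ ≤ t → ∃ p r : Fin N → ℝ,
      q t = p + r ∧ G.mulVec p = 0 ∧
      (∀ z : Fin N → ℝ, G.mulVec z = 0 → dotProduct r z = 0) ∧
      e2norm r ≤ C * t ^ (-(3 : ℝ) / 2)) := by
  obtain ⟨hq, hv⟩ := htraj
  have hGsym : ∀ x y : Fin N → ℝ, dotProduct (G.mulVec x) y = dotProduct x (G.mulVec y) := by
    intro x y
    calc dotProduct (G.mulVec x) y = dotProduct y (G.mulVec x) := dotProduct_comm _ _
    _ = dotProduct (Matrix.vecMul y G) x := Matrix.dotProduct_mulVec _ _ _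
    _ = dotProduct (Matrix.mulVec G.transpose y) x := by rw [Matrix.mulVec_transpose]
    _ = dotProduct (G.mulVec y) x := by rw [hsymm]
    _ = dotProduct x (G.mulVec y) := dotProduct_comm _ _
  set E := EuclideanSpace ℝ (Fin N) with hE
  let e : E ≃L[ℝ] (Fin N → ℝ) := EuclideanSpace.equiv (Fin N) ℝ
  let Q : ℝ → E := fun t => e.symm (q t)
  let V : ℝ → E := fun t => e.symm (v t)
  let Alin : E →ₗ[ℝ] E :=
    { toFun := fun x => e.symm (G.mulVec (e x))
      map_add' := by intro a b; simp [Matrix.mulVec_add]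
      map_smul' := by intro m a; simp [Matrix.mulVec_smul] }
  have heA : ∀ x : E, e (Alin x) = G.mulVec (e x) := by
    intro x; simp [Alin]
  have heQ : ∀ t, e (Q t) = q t := fun t => e.apply_symm_apply (q t)
  have heV : ∀ t, e (V t) = v t := fun t => e.apply_symm_apply (v t)
  have hQ : ∀ t, t₀ ≤ t → HasDerivAt Q (V t) t := by
    intro t ht
    exact (e.symm.toContinuousLinearMap.hasFDerivAt.comp_hasDerivAt t (hq t ht))
  have hV : ∀ t, t₀ ≤ t → HasDerivAt V (-(3/t) • V t - Alin (Q t)) t := by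
    intro t ht
    have := (e.symm.toContinuousLinearMap.hasFDerivAt.comp_hasDerivAt t (hv t ht))
    refine this.congr_deriv ?_
    simp [V, Q, Alin]
  have hinner : ∀ x y : E, ⟪x, y⟫ = dotProduct (e x) (e y) := by
    intro x y
    simp [PiLp.inner_apply, dotProduct, RCLike.inner_apply, e]
    rw [PiLp.inner_apply (𝕜 := ℝ) x y]
    simp only [RCLike.inner_apply, conj_trivial]
    refine Finset.sum_congr rfl fun i _ => ?_
    rw [mul_comm]
    rfl
  have hAsymm : ∀ x y : E, ⟪Alin x, y⟫ = ⟪x, Alin y⟫ := by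
    intro x y
    rw [hinner, hinner, heA, heA, hGsym]
  have hApsd : ∀ x : E, 0 ≤ ⟪x, Alin x⟫ := by
    intro x
    rw [hinner, heA]
    exact hpsd _
  -- null space and projection
  let K : Submodule ℝ E := LinearMap.ker Alin
  let P : E →L[ℝ] E := K.subtypeL.comp K.orthogonalProjectionOnto
  have hPmem : ∀ x : E, P x ∈ K := fun x => (K.orthogonalProjectionOnto x).2
  have hAlinmem : ∀ x : E, x ∈ K → Alin x = 0 := fun x hx => hx
  have hPA : ∀ x : E, P (Alin x) = 0 := by
    intro x
    have hmem : Alin x ∈ Kᗮ := by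
      intro z hz
      rw [← hAsymm, hAlinmem z hz, inner_zero_left]
    simp [P, Submodule.orthogonalProjectionOnto_apply_of_mem_orthogonal hmem]
  have hsubmem : ∀ x : E, x - P x ∈ Kᗮ := fun x => K.sub_starProjection_mem_orthogonal x
  have hne : ∀ t : ℝ, t₀ ≤ t → (0:ℝ) < t := fun t ht => lt_of_lt_of_le ht₀ ht
  -- dynamics of the projected part
  set c : E := (t₀^3) • P (V t₀) with hc
  have hcK : c ∈ K := Submodule.smul_mem _ _ (hPmem _)
  have hPV' : ∀ t, t₀ ≤ t → HasDerivAt (fun s => P (V s)) (-(3/t) • P (V t)) t := by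
    intro t ht
    have := P.hasFDerivAt.comp_hasDerivAt t (hV t ht)
    refine this.congr_deriv (Eq.symm ?_)
    simp [map_sub, map_smul, hPA]
  have hPVconst : ∀ t, t₀ ≤ t → (t^3) • P (V t) = c := by
    apply const_on_Ici
    intro t ht
    have ht' : t ≠ 0 := (hne t ht).ne'
    have h1 : HasDerivAt (fun s : ℝ => s^3) (3 * t^2) t := by
      simpa using hasDerivAt_pow 3 t
    have := h1.smul (hPV' t ht)
    refine this.congr_deriv (Eq.symm ?_)
    rw [smul_smul, ← add_smul]
    have h2 : t^3 * -(3/t) + (3 * t^2) = 0 := by field_simp; ring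
    rw [h2, zero_smul]
  have hPV : ∀ t, t₀ ≤ t → P (V t) = (t^3)⁻¹ • c := by
    intro t ht
    rw [← hPVconst t ht, smul_smul, inv_mul_cancel₀ (pow_ne_zero 3 (hne t ht).ne'), one_smul]
  have hPQ : ∀ t, t₀ ≤ t → P (Q t) = P (Q t₀) + ((2*t₀^2)⁻¹ - (2*t^2)⁻¹) • c := by
    have key : ∀ t, t₀ ≤ t → P (Q t) + (2*t^2)⁻¹ • c = P (Q t₀) + (2*t₀^2)⁻¹ • c := by
      apply const_on_Ici
      intro t ht
      have ht' : t ≠ 0 := (hne t ht).ne'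
      have hscal : HasDerivAt (fun s : ℝ => (2*s^2)⁻¹) (-(t^3)⁻¹) t := by
        have h1 : HasDerivAt (fun s : ℝ => 2*s^2) (2*(2*t)) t := by
          simpa using (hasDerivAt_pow 2 t).const_mul 2
        have := h1.inv (mul_ne_zero two_ne_zero (pow_ne_zero 2 ht'))
        refine this.congr_deriv (Eq.symm ?_)
        field_simp
      have hP : HasDerivAt (fun s => P (Q s)) (P (V t)) t :=
        P.hasFDerivAt.comp_hasDerivAt t (hQ t ht)
      have := hP.add (hscal.smul_const c)
      refine this.congr_deriv (Eq.symm ?_)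
      rw [hPV t ht, neg_smul, ← sub_eq_add_neg, sub_self]
    intro t ht
    have h := key t ht
    have h3 : P (Q t) = P (Q t₀) + (2*t₀^2)⁻¹ • c - (2*t^2)⁻¹ • c := by
      rw [← h]; abel
    rw [h3, sub_smul]; abel
  -- residual dynamics
  set r : ℝ → E := fun t => Q t - P (Q t) with hrdef
  set rv : ℝ → E := fun t => V t - P (V t) with hrvdef
  let AC : E →L[ℝ] E := LinearMap.toContinuousLinearMap Alin
  have hACA : ∀ x : E, AC x = Alin x := fun x => rfl
  have hr : ∀ t, t₀ ≤ t → HasDerivAt r (rv t) t := by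
    intro t ht
    exact (hQ t ht).sub (P.hasFDerivAt.comp_hasDerivAt t (hQ t ht))
  have hrv : ∀ t, t₀ ≤ t → HasDerivAt rv (-(3/t) • rv t - AC (r t)) t := by
    intro t ht
    have h := (hV t ht).sub (P.hasFDerivAt.comp_hasDerivAt t (hV t ht))
    refine h.congr_deriv (Eq.symm ?_)
    rw [hACA]
    have h1 : Alin (r t) = Alin (Q t) := by
      rw [hrdef]
      simp only [map_sub]
      rw [hAlinmem _ (hPmem (Q t)), sub_zero]
    rw [h1]
    simp only [map_sub, map_smul, hPA, sub_zero, hrvdef]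
    module
  have hrK : ∀ t, r t ∈ Kᗮ := fun t => hsubmem (Q t)
  have hsymAC : ∀ x y : E, ⟪AC x, y⟫ = ⟪x, AC y⟫ := fun x y => hAsymm x y
  have hpsdAC : ∀ x : E, 0 ≤ ⟪x, AC x⟫ := fun x => hApsd x
  have hKeq : LinearMap.ker (AC : E →ₗ[ℝ] E) = K := rfl
  obtain ⟨μ, hμpos, hμ⟩ := coercive_on_orthogonal AC hsymAC hpsdAC
  have hcoer : ∀ t, t₀ ≤ t → μ * ‖r t‖^2 ≤ ⟪r t, AC (r t)⟫ := by
    intro t ht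
    apply hμ
    rw [hKeq]
    exact hrK t
  obtain ⟨⟨C, hC0, hCb⟩, hrvto⟩ :=
    decay_lemma AC hsymAC hpsdAC t₀ μ ht₀ hμpos r rv hr hrv hcoer
  -- scalar limits
  have hcube : Tendsto (fun t : ℝ => t^3) atTop atTop := tendsto_pow_atTop (by norm_num)
  have hinv3 : Tendsto (fun t : ℝ => (t^3)⁻¹) atTop (nhds 0) := hcube.inv_tendsto_atTop
  have hsq' : Tendsto (fun t : ℝ => 2*t^2) atTop atTop := by
    apply Tendsto.const_mul_atTop (by norm_num : (0:ℝ) < 2)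
    exact tendsto_pow_atTop (by norm_num)
  have hinv2 : Tendsto (fun t : ℝ => (2*t^2)⁻¹) atTop (nhds 0) := hsq'.inv_tendsto_atTop
  -- r tends to 0
  have hrto : Tendsto r atTop (nhds 0) := by
    rw [tendsto_zero_iff_norm_tendsto_zero]
    apply squeeze_zero' (Eventually.of_forall (fun t => norm_nonneg _))
    · filter_upwards [eventually_ge_atTop t₀] with t ht
      exact hCb t ht
    · have h1 : Tendsto (fun t : ℝ => t ^ (-(3:ℝ)/2)) atTop (nhds 0) := by
        have := tendsto_rpow_neg_atTop (by norm_num : (0:ℝ) < 3/2)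
        convert this using 2 with t
        norm_num
      simpa using h1.const_mul C
  -- velocity tends to 0
  have hPVto : Tendsto (fun t => P (V t)) atTop (nhds 0) := by
    apply Tendsto.congr' (f₁ := fun t => (t^3)⁻¹ • c)
    · filter_upwards [eventually_ge_atTop t₀] with t ht
      exact (hPV t ht).symm
    · simpa using hinv3.smul_const c
  have hVto : Tendsto V atTop (nhds 0) := by
    have h := hrvto.add hPVto
    rw [add_zero] at h
    apply h.congr
    intro t
    show V t - P (V t) + P (V t) = V t
    abel
  have hvto : Tendsto v atTop (nhds 0) := by
    have h := (e.continuous.tendsto 0).comp hVto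
    simp only [Function.comp_def] at h
    have h0 : e (0 : E) = 0 := map_zero e
    rw [h0] at h
    apply h.congr
    intro t
    exact heV t
  refine ⟨hvto, ?_, ?_⟩
  -- convergence of q
  · set qinfE : E := P (Q t₀) + (2*t₀^2)⁻¹ • c with hqinfE
    have hqinfK : qinfE ∈ K := Submodule.add_mem _ (hPmem _) (Submodule.smul_mem _ _ hcK)
    have hPQto : Tendsto (fun t => P (Q t)) atTop (nhds qinfE) := by
      apply Tendsto.congr' (f₁ := fun t => P (Q t₀) + ((2*t₀^2)⁻¹ - (2*t^2)⁻¹) • c)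
      · filter_upwards [eventually_ge_atTop t₀] with t ht
        exact (hPQ t ht).symm
      · have h1 : Tendsto (fun t : ℝ => ((2*t₀^2)⁻¹ - (2*t^2)⁻¹)) atTop (nhds ((2*t₀^2)⁻¹)) := by
          have := tendsto_const_nhds (x := (2*t₀^2)⁻¹) (f := atTop (α := ℝ)) |>.sub hinv2
          simpa using this
        have h2 := h1.smul_const c
        have h3 := (tendsto_const_nhds (x := P (Q t₀)) (f := atTop (α := ℝ))).add h2
        exact h3
    have hQto : Tendsto Q atTop (nhds qinfE) := by
      have h := hPQto.add hrto
      rw [add_zero] at h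
      apply h.congr
      intro t
      show P (Q t) + (Q t - P (Q t)) = Q t
      abel
    refine ⟨e qinfE, ?_, ?_⟩
    · have : Alin qinfE = 0 := hAlinmem _ hqinfK
      have h2 : e.symm (G.mulVec (e qinfE)) = 0 := this
      have h3 := congrArg e h2
      rw [e.apply_symm_apply, map_zero] at h3
      exact h3
    · have h := (e.continuous.tendsto qinfE).comp hQto
      simp only [Function.comp_def] at h
      apply h.congr
      intro t
      exact heQ t
  -- the orthogonal component bound
  · refine ⟨C, hC0, ?_⟩
    intro t ht
    refine ⟨e (P (Q t)), e (r t), ?_, ?_, ?_, ?_⟩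
    · rw [← heQ t, ← map_add]
      congr 1
      show Q t = P (Q t) + (Q t - P (Q t))
      abel
    · have : Alin (P (Q t)) = 0 := hAlinmem _ (hPmem _)
      have h2 : e.symm (G.mulVec (e (P (Q t)))) = 0 := this
      have h3 := congrArg e h2
      rw [e.apply_symm_apply, map_zero] at h3
      exact h3
    · intro z hz
      have hzK : e.symm z ∈ K := by
        show Alin (e.symm z) = 0
        show e.symm (G.mulVec (e (e.symm z))) = 0
        rw [e.apply_symm_apply, hz, map_zero]
      have h1 : ⟪e.symm z, r t⟫ = 0 := hrK t (e.symm z) hzK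
      have h2 : ⟪r t, e.symm z⟫ = 0 := by rw [real_inner_comm]; exact h1
      rw [hinner, e.apply_symm_apply] at h2
      exact h2
    · have henorm : e2norm (e (r t)) = ‖r t‖ := by
        rw [EuclideanSpace.norm_eq]
        unfold e2norm
        congr 1
        apply Finset.sum_congr rfl
        intro i _
        rw [Real.norm_eq_abs, sq_abs]
        rfl
      rw [henorm]
      exact hCb t ht
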